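/- Let χ : {1,...,n} → {ℓ,r}, ε : {1,...,n} → I, ι ∈ I. In the formal sum defining ⊤_ι(z₁⋯z_n) = ∑_{i ∈ ε⁻¹(ι)} ∑_{j ∈ ε⁻¹(ι), i ⪯_χ j} ( z_{[i,j]_χᶜ} ⊗ z_{[i,j]_χ} − z_{[i,j)_χᶜ} ⊗ z_{[i,j)_χ} − z_{(i,j]_χᶜ} ⊗ z_{(i,j]_χ} + z_{(i,j)_χᶜ} ⊗ z_{(i,j)_χ} ), every term whose χ-interval splits some maximal ε-monochromatic χ-interval (i.e., whose interval endpoint separates two ≺_χ-consecutive indices with the same ε-value) cancels; the surviving terms are exactly those tensor splittings where the cut falls between two maximal ε-monochromatic χ-intervals of which exactly one is ι-coloured, together with the diagonal terms i = j each contributing −z₁⋯z_n ⊗ 1. -/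
import Mathlib


noncomputable def chiKey {n : ℕ} (χ : Fin n → Bool) (i : Fin n) : Lex (ℕ × ℕ) :=
  toLex (if χ i then 0 else 1, if χ i then (i : ℕ) else n - (i : ℕ))

noncomputable def sChi {n : ℕ} (χ : Fin n → Bool) : Equiv.Perm (Fin n) :=
  Tuple.sort (chiKey χ)

def ltChi {n : ℕ} (χ : Fin n → Bool) (i j : Fin n) : Prop :=
  (sChi χ).symm i < (sChi χ).symm j

noncomputable instance {n : ℕ} (χ : Fin n → Bool) (i j : Fin n) :
    Decidable (ltChi χ i j) :=
  inferInstanceAs (Decidable ((sChi χ).symm i < (sChi χ).symm j))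

/-- `i ⪯_χ j`. -/
def leChi {n : ℕ} (χ : Fin n → Bool) (i j : Fin n) : Prop := ¬ ltChi χ j i

noncomputable instance {n : ℕ} (χ : Fin n → Bool) (i j : Fin n) :
    Decidable (leChi χ i j) := inferInstanceAs (Decidable (¬ _))

/-- The closed `χ`-interval `[i,j]_χ`. -/
noncomputable def IccChi {n : ℕ} (χ : Fin n → Bool) (i j : Fin n) : Finset (Fin n) :=
  Finset.univ.filter fun k => leChi χ i k ∧ leChi χ k j

/-- The `χ`-interval `[i,j)_χ`. -/
noncomputable def IcoChi {n : ℕ} (χ : Fin n → Bool) (i j : Fin n) : Finset (Fin n) :=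
  Finset.univ.filter fun k => leChi χ i k ∧ ltChi χ k j

/-- The `χ`-interval `(i,j]_χ`. -/
noncomputable def IocChi {n : ℕ} (χ : Fin n → Bool) (i j : Fin n) : Finset (Fin n) :=
  Finset.univ.filter fun k => ltChi χ i k ∧ leChi χ k j

/-- The open `χ`-interval `(i,j)_χ`. -/
noncomputable def IooChi {n : ℕ} (χ : Fin n → Bool) (i j : Fin n) : Finset (Fin n) :=
  Finset.univ.filter fun k => ltChi χ i k ∧ ltChi χ k j

def IsChiInterval {n : ℕ} (χ : Fin n → Bool) (I : Set (Fin n)) : Prop :=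
  ∀ a b c : Fin n, a ∈ I → c ∈ I → ltChi χ a b → ltChi χ b c → b ∈ I

def IsMono {n : ℕ} {ι : Type*} (ε : Fin n → ι) (I : Set (Fin n)) : Prop :=
  ∀ a ∈ I, ∀ b ∈ I, ε a = ε b

def IsMaxMono {n : ℕ} {ι : Type*} (χ : Fin n → Bool) (ε : Fin n → ι)
    (J : Set (Fin n)) : Prop :=
  J.Nonempty ∧ IsChiInterval χ J ∧ IsMono ε J ∧
    ∀ K : Set (Fin n), IsChiInterval χ K → IsMono ε K → J ⊆ K → J = K

/-- The coefficient of the formal tensor `z_{Sᶜ} ⊗ z_S` in the defining sum of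
`⊤_ι(z₁⋯z_n)`: the sum over pairs `i ⪯_χ j` in `ε⁻¹(ι)` of
`[S = [i,j]_χ] − [S = [i,j)_χ] − [S = (i,j]_χ] + [S = (i,j)_χ]`. -/
noncomputable def taurCoeff {n : ℕ} {ι : Type*} [DecidableEq ι]
    (χ : Fin n → Bool) (ε : Fin n → ι) (c : ι) (S : Finset (Fin n)) : ℤ :=
  ∑ p : Fin n × Fin n,
    if ε p.1 = c ∧ ε p.2 = c ∧ leChi χ p.1 p.2 then
      (if S = IccChi χ p.1 p.2 then 1 else 0) - (if S = IcoChi χ p.1 p.2 then 1 else 0)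
        - (if S = IocChi χ p.1 p.2 then 1 else 0) + (if S = IooChi χ p.1 p.2 then 1 else 0)
    else 0




section Char
variable {n : ℕ}

lemma eq_Icc_iff {m M : Fin n} (hmM : m ≤ M) (i j : Fin n) (hij : i ≤ j) :
    (Finset.Icc m M = Finset.Icc i j) ↔ (i = m ∧ j = M) := by
  rw [Fin.le_def] at hmM hij
  constructor
  · intro h
    have key : ∀ k : ℕ, k < n → (((m:ℕ) ≤ k ∧ k ≤ (M:ℕ)) ↔ ((i:ℕ) ≤ k ∧ k ≤ (j:ℕ))) := by
      intro k hk
      have := Finset.ext_iff.mp h ⟨k, hk⟩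
      rw [Finset.mem_Icc, Finset.mem_Icc] at this
      simpa [Fin.le_def] using this
    have h1 := key m m.isLt
    have h2 := key M M.isLt
    have h3 := key i i.isLt
    have h4 := key j j.isLt
    exact ⟨Fin.ext (by omega), Fin.ext (by omega)⟩
  · rintro ⟨rfl, rfl⟩; rfl

lemma eq_Ico_iff {m M : Fin n} (hmM : m ≤ M) (i j : Fin n) (hij : i ≤ j) :
    (Finset.Icc m M = Finset.Ico i j) ↔ (i = m ∧ (j:ℕ) = (M:ℕ) + 1) := by
  rw [Fin.le_def] at hmM hij
  constructor
  · intro h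
    have key : ∀ k : ℕ, k < n → (((m:ℕ) ≤ k ∧ k ≤ (M:ℕ)) ↔ ((i:ℕ) ≤ k ∧ k < (j:ℕ))) := by
      intro k hk
      have := Finset.ext_iff.mp h ⟨k, hk⟩
      rw [Finset.mem_Icc, Finset.mem_Ico] at this
      simpa [Fin.le_def, Fin.lt_def] using this
    have h1 := key m m.isLt
    have h2 := key M M.isLt
    have h3 := key i i.isLt
    have hj := j.isLt
    by_cases hc : (M:ℕ) + 1 < n
    · have h4 := key ((M:ℕ)+1) hc
      exact ⟨Fin.ext (by omega), by omega⟩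
    · exact ⟨Fin.ext (by omega), by omega⟩
  · rintro ⟨rfl, hj⟩
    ext k
    simp only [Finset.mem_Icc, Finset.mem_Ico, Fin.le_def, Fin.lt_def]
    omega

lemma eq_Ioc_iff {m M : Fin n} (hmM : m ≤ M) (i j : Fin n) (hij : i ≤ j) :
    (Finset.Icc m M = Finset.Ioc i j) ↔ ((i:ℕ) + 1 = (m:ℕ) ∧ j = M) := by
  rw [Fin.le_def] at hmM hij
  constructor
  · intro h
    have key : ∀ k : ℕ, k < n → (((m:ℕ) ≤ k ∧ k ≤ (M:ℕ)) ↔ ((i:ℕ) < k ∧ k ≤ (j:ℕ))) := by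
      intro k hk
      have := Finset.ext_iff.mp h ⟨k, hk⟩
      rw [Finset.mem_Icc, Finset.mem_Ioc] at this
      simpa [Fin.le_def, Fin.lt_def] using this
    have h1 := key m m.isLt
    have h2 := key M M.isLt
    have h3 := key j j.isLt
    by_cases hc : (i:ℕ) + 1 < n
    · have h4 := key ((i:ℕ)+1) hc
      exact ⟨by omega, Fin.ext (by omega)⟩
    · have hi := i.isLt
      exact ⟨by omega, Fin.ext (by omega)⟩
  · rintro ⟨hi, rfl⟩
    ext k
    simp only [Finset.mem_Icc, Finset.mem_Ioc, Fin.le_def, Fin.lt_def]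
    omega

lemma eq_Ioo_iff {m M : Fin n} (hmM : m ≤ M) (i j : Fin n) (hij : i ≤ j) :
    (Finset.Icc m M = Finset.Ioo i j) ↔ ((i:ℕ) + 1 = (m:ℕ) ∧ (j:ℕ) = (M:ℕ) + 1) := by
  rw [Fin.le_def] at hmM hij
  constructor
  · intro h
    have key : ∀ k : ℕ, k < n → (((m:ℕ) ≤ k ∧ k ≤ (M:ℕ)) ↔ ((i:ℕ) < k ∧ k < (j:ℕ))) := by
      intro k hk
      have := Finset.ext_iff.mp h ⟨k, hk⟩
      rw [Finset.mem_Icc, Finset.mem_Ioo] at this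
      simpa [Fin.le_def, Fin.lt_def] using this
    have h1 := key m m.isLt
    have h2 := key M M.isLt
    have hi := i.isLt
    have hj := j.isLt
    by_cases hc : (i:ℕ) + 1 < n
    · have h4 := key ((i:ℕ)+1) hc
      by_cases hc2 : (M:ℕ) + 1 < n
      · have h5 := key ((M:ℕ)+1) hc2
        exact ⟨by omega, by omega⟩
      · exact ⟨by omega, by omega⟩
    · by_cases hc2 : (M:ℕ) + 1 < n
      · have h5 := key ((M:ℕ)+1) hc2
        exact ⟨by omega, by omega⟩
      · exact ⟨by omega, by omega⟩
  · rintro ⟨hi, hj⟩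
    ext k
    simp only [Finset.mem_Icc, Finset.mem_Ioo, Fin.le_def, Fin.lt_def]
    omega

end Char

section Core
variable {n : ℕ} {ι : Type*} [DecidableEq ι]

def natCoeff (ε : Fin n → ι) (c : ι) (S : Finset (Fin n)) : ℤ :=
  ∑ p : Fin n × Fin n,
    if ε p.1 = c ∧ ε p.2 = c ∧ p.1 ≤ p.2 then
      (if S = Finset.Icc p.1 p.2 then 1 else 0) - (if S = Finset.Ico p.1 p.2 then 1 else 0)
        - (if S = Finset.Ioc p.1 p.2 then 1 else 0) + (if S = Finset.Ioo p.1 p.2 then 1 else 0)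
    else 0

lemma sum_ind_eq {p₀ : Fin n × Fin n} {Q : Fin n × Fin n → Prop} [DecidablePred Q]
    {R : Prop} [Decidable R] (hQ : ∀ p, Q p ↔ p = p₀ ∧ R) :
    (∑ p : Fin n × Fin n, if Q p then (1:ℤ) else 0) = if R then 1 else 0 := by
  by_cases hR : R
  · rw [if_pos hR]
    have h : ∀ p : Fin n × Fin n, (if Q p then (1:ℤ) else 0) = if p = p₀ then 1 else 0 := by
      intro p; simp [hQ, hR]
    simp_rw [h]
    simp
  · have h : ∀ p : Fin n × Fin n, (if Q p then (1:ℤ) else 0) = 0 := by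
      intro p; simp [hQ, hR]
    simp [h, hR]

variable {m M : Fin n} {ε : Fin n → ι} {c : ι}

lemma sumIcc (hmM : m ≤ M) :
    (∑ p : Fin n × Fin n, if (ε p.1 = c ∧ ε p.2 = c ∧ p.1 ≤ p.2) ∧
        Finset.Icc m M = Finset.Icc p.1 p.2 then (1:ℤ) else 0)
      = if ε m = c ∧ ε M = c then 1 else 0 := by
  apply sum_ind_eq (p₀ := (m, M))
  intro p
  constructor
  · rintro ⟨⟨h1, h2, hle⟩, heq⟩
    obtain ⟨hp1, hp2⟩ := (eq_Icc_iff hmM p.1 p.2 hle).mp heq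
    rw [hp1] at h1; rw [hp2] at h2
    exact ⟨Prod.ext_iff.mpr ⟨hp1, hp2⟩, h1, h2⟩
  · rintro ⟨rfl, h1, h2⟩
    exact ⟨⟨h1, h2, hmM⟩, rfl⟩

lemma sumIco (hmM : m ≤ M) :
    (∑ p : Fin n × Fin n, if (ε p.1 = c ∧ ε p.2 = c ∧ p.1 ≤ p.2) ∧
        Finset.Icc m M = Finset.Ico p.1 p.2 then (1:ℤ) else 0)
      = if ε m = c ∧ ∃ b : Fin n, (b:ℕ) = (M:ℕ) + 1 ∧ ε b = c then 1 else 0 := by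
  by_cases hex : ∃ b : Fin n, (b:ℕ) = (M:ℕ) + 1
  · obtain ⟨b₀, hb₀⟩ := hex
    have hiff : (ε m = c ∧ ∃ b : Fin n, (b:ℕ) = (M:ℕ) + 1 ∧ ε b = c) ↔ (ε m = c ∧ ε b₀ = c) := by
      constructor
      · rintro ⟨h1, b, hb, h2⟩
        have : b = b₀ := Fin.ext (by omega)
        exact ⟨h1, this ▸ h2⟩
      · rintro ⟨h1, h2⟩
        exact ⟨h1, b₀, hb₀, h2⟩
    rw [if_congr hiff rfl rfl]
    apply sum_ind_eq (p₀ := (m, b₀))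
    intro p
    constructor
    · rintro ⟨⟨h1, h2, hle⟩, heq⟩
      obtain ⟨hp1, hp2⟩ := (eq_Ico_iff hmM p.1 p.2 hle).mp heq
      have hp2' : p.2 = b₀ := Fin.ext (by omega)
      rw [hp1] at h1; rw [hp2'] at h2
      exact ⟨Prod.ext_iff.mpr ⟨hp1, hp2'⟩, h1, h2⟩
    · rintro ⟨rfl, h1, h2⟩
      have hle : m ≤ b₀ := by rw [Fin.le_def] at hmM ⊢; omega
      exact ⟨⟨h1, h2, hle⟩, (eq_Ico_iff hmM m b₀ hle).mpr ⟨rfl, hb₀⟩⟩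
  · have h0 : ∀ p : Fin n × Fin n, ¬ ((ε p.1 = c ∧ ε p.2 = c ∧ p.1 ≤ p.2) ∧
        Finset.Icc m M = Finset.Ico p.1 p.2) := by
      rintro p ⟨⟨h1, h2, hle⟩, heq⟩
      obtain ⟨hp1, hp2⟩ := (eq_Ico_iff hmM p.1 p.2 hle).mp heq
      exact hex ⟨p.2, hp2⟩
    have hr : ¬ (ε m = c ∧ ∃ b : Fin n, (b:ℕ) = (M:ℕ) + 1 ∧ ε b = c) := by
      rintro ⟨-, b, hb, -⟩; exact hex ⟨b, hb⟩
    simp [h0, hr]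

lemma sumIoc (hmM : m ≤ M) :
    (∑ p : Fin n × Fin n, if (ε p.1 = c ∧ ε p.2 = c ∧ p.1 ≤ p.2) ∧
        Finset.Icc m M = Finset.Ioc p.1 p.2 then (1:ℤ) else 0)
      = if (∃ a : Fin n, (a:ℕ) + 1 = (m:ℕ) ∧ ε a = c) ∧ ε M = c then 1 else 0 := by
  by_cases hex : ∃ a : Fin n, (a:ℕ) + 1 = (m:ℕ)
  · obtain ⟨a₀, ha₀⟩ := hex
    have hiff : ((∃ a : Fin n, (a:ℕ) + 1 = (m:ℕ) ∧ ε a = c) ∧ ε M = c) ↔ (ε a₀ = c ∧ ε M = c) := by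
      constructor
      · rintro ⟨⟨a, ha, h2⟩, h1⟩
        have : a = a₀ := Fin.ext (by omega)
        exact ⟨this ▸ h2, h1⟩
      · rintro ⟨h2, h1⟩
        exact ⟨⟨a₀, ha₀, h2⟩, h1⟩
    rw [if_congr hiff rfl rfl]
    apply sum_ind_eq (p₀ := (a₀, M))
    intro p
    constructor
    · rintro ⟨⟨h1, h2, hle⟩, heq⟩
      obtain ⟨hp1, hp2⟩ := (eq_Ioc_iff hmM p.1 p.2 hle).mp heq
      have hp1' : p.1 = a₀ := Fin.ext (by omega)
      rw [hp1'] at h1; rw [hp2] at h2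
      exact ⟨Prod.ext_iff.mpr ⟨hp1', hp2⟩, h1, h2⟩
    · rintro ⟨rfl, h1, h2⟩
      have hle : a₀ ≤ M := by rw [Fin.le_def] at hmM ⊢; omega
      exact ⟨⟨h1, h2, hle⟩, (eq_Ioc_iff hmM a₀ M hle).mpr ⟨ha₀, rfl⟩⟩
  · have h0 : ∀ p : Fin n × Fin n, ¬ ((ε p.1 = c ∧ ε p.2 = c ∧ p.1 ≤ p.2) ∧
        Finset.Icc m M = Finset.Ioc p.1 p.2) := by
      rintro p ⟨⟨h1, h2, hle⟩, heq⟩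
      obtain ⟨hp1, hp2⟩ := (eq_Ioc_iff hmM p.1 p.2 hle).mp heq
      exact hex ⟨p.1, hp1⟩
    have hr : ¬ ((∃ a : Fin n, (a:ℕ) + 1 = (m:ℕ) ∧ ε a = c) ∧ ε M = c) := by
      rintro ⟨⟨a, ha, -⟩, -⟩; exact hex ⟨a, ha⟩
    simp [h0, hr]

lemma sumIoo (hmM : m ≤ M) :
    (∑ p : Fin n × Fin n, if (ε p.1 = c ∧ ε p.2 = c ∧ p.1 ≤ p.2) ∧
        Finset.Icc m M = Finset.Ioo p.1 p.2 then (1:ℤ) else 0)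
      = if (∃ a : Fin n, (a:ℕ) + 1 = (m:ℕ) ∧ ε a = c) ∧
          (∃ b : Fin n, (b:ℕ) = (M:ℕ) + 1 ∧ ε b = c) then 1 else 0 := by
  by_cases hex : (∃ a : Fin n, (a:ℕ) + 1 = (m:ℕ)) ∧ (∃ b : Fin n, (b:ℕ) = (M:ℕ) + 1)
  · obtain ⟨⟨a₀, ha₀⟩, ⟨b₀, hb₀⟩⟩ := hex
    have hiff : ((∃ a : Fin n, (a:ℕ) + 1 = (m:ℕ) ∧ ε a = c) ∧
          (∃ b : Fin n, (b:ℕ) = (M:ℕ) + 1 ∧ ε b = c)) ↔ (ε a₀ = c ∧ ε b₀ = c) := by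
      constructor
      · rintro ⟨⟨a, ha, h2⟩, ⟨b, hb, h3⟩⟩
        have ha' : a = a₀ := Fin.ext (by omega)
        have hb' : b = b₀ := Fin.ext (by omega)
        exact ⟨ha' ▸ h2, hb' ▸ h3⟩
      · rintro ⟨h2, h3⟩
        exact ⟨⟨a₀, ha₀, h2⟩, ⟨b₀, hb₀, h3⟩⟩
    rw [if_congr hiff rfl rfl]
    apply sum_ind_eq (p₀ := (a₀, b₀))
    intro p
    constructor
    · rintro ⟨⟨h1, h2, hle⟩, heq⟩
      obtain ⟨hp1, hp2⟩ := (eq_Ioo_iff hmM p.1 p.2 hle).mp heq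
      have hp1' : p.1 = a₀ := Fin.ext (by omega)
      have hp2' : p.2 = b₀ := Fin.ext (by omega)
      rw [hp1'] at h1; rw [hp2'] at h2
      exact ⟨Prod.ext_iff.mpr ⟨hp1', hp2'⟩, h1, h2⟩
    · rintro ⟨rfl, h1, h2⟩
      have hle : a₀ ≤ b₀ := by rw [Fin.le_def] at hmM ⊢; omega
      exact ⟨⟨h1, h2, hle⟩, (eq_Ioo_iff hmM a₀ b₀ hle).mpr ⟨ha₀, hb₀⟩⟩
  · have h0 : ∀ p : Fin n × Fin n, ¬ ((ε p.1 = c ∧ ε p.2 = c ∧ p.1 ≤ p.2) ∧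
        Finset.Icc m M = Finset.Ioo p.1 p.2) := by
      rintro p ⟨⟨h1, h2, hle⟩, heq⟩
      obtain ⟨hp1, hp2⟩ := (eq_Ioo_iff hmM p.1 p.2 hle).mp heq
      exact hex ⟨⟨p.1, hp1⟩, ⟨p.2, hp2⟩⟩
    have hr : ¬ ((∃ a : Fin n, (a:ℕ) + 1 = (m:ℕ) ∧ ε a = c) ∧
          (∃ b : Fin n, (b:ℕ) = (M:ℕ) + 1 ∧ ε b = c)) := by
      rintro ⟨⟨a, ha, -⟩, ⟨b, hb, -⟩⟩; exact hex ⟨⟨a, ha⟩, ⟨b, hb⟩⟩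
    simp [h0, hr]

lemma natCoeff_Icc (hmM : m ≤ M) :
    natCoeff ε c (Finset.Icc m M) =
      ((if ε m = c then (1:ℤ) else 0) -
        (if ∃ a : Fin n, (a:ℕ) + 1 = (m:ℕ) ∧ ε a = c then 1 else 0)) *
      ((if ε M = c then (1:ℤ) else 0) -
        (if ∃ b : Fin n, (b:ℕ) = (M:ℕ) + 1 ∧ ε b = c then 1 else 0)) := by
  have hsplit : natCoeff ε c (Finset.Icc m M) =
      (∑ p : Fin n × Fin n, if (ε p.1 = c ∧ ε p.2 = c ∧ p.1 ≤ p.2) ∧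
          Finset.Icc m M = Finset.Icc p.1 p.2 then (1:ℤ) else 0)
      - (∑ p : Fin n × Fin n, if (ε p.1 = c ∧ ε p.2 = c ∧ p.1 ≤ p.2) ∧
          Finset.Icc m M = Finset.Ico p.1 p.2 then (1:ℤ) else 0)
      - (∑ p : Fin n × Fin n, if (ε p.1 = c ∧ ε p.2 = c ∧ p.1 ≤ p.2) ∧
          Finset.Icc m M = Finset.Ioc p.1 p.2 then (1:ℤ) else 0)
      + (∑ p : Fin n × Fin n, if (ε p.1 = c ∧ ε p.2 = c ∧ p.1 ≤ p.2) ∧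
          Finset.Icc m M = Finset.Ioo p.1 p.2 then (1:ℤ) else 0) := by
    rw [natCoeff, ← Finset.sum_sub_distrib, ← Finset.sum_sub_distrib, ← Finset.sum_add_distrib]
    apply Finset.sum_congr rfl
    intro p _
    by_cases hC : ε p.1 = c ∧ ε p.2 = c ∧ p.1 ≤ p.2
    · simp [hC]
    · simp [hC]
  rw [hsplit, sumIcc hmM, sumIco hmM, sumIoc hmM, sumIoo hmM]
  by_cases h1 : ε m = c <;> by_cases h2 : ε M = c <;>
    by_cases h3 : ∃ a : Fin n, (a:ℕ) + 1 = (m:ℕ) ∧ ε a = c <;>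
    by_cases h4 : ∃ b : Fin n, (b:ℕ) = (M:ℕ) + 1 ∧ ε b = c <;>
    simp [h1, h2, h3, h4]

end Core


section Canc
variable {n : ℕ} {ι : Type*} [DecidableEq ι] {ε : Fin n → ι} {c : ι}

lemma natCoeff_not_interval {S : Finset (Fin n)} (hne : S.Nonempty)
    (hni : ∀ m M : Fin n, m ≤ M → S ≠ Finset.Icc m M) : natCoeff ε c S = 0 := by
  apply Finset.sum_eq_zero
  intro p _
  by_cases hC : ε p.1 = c ∧ ε p.2 = c ∧ p.1 ≤ p.2
  case neg => rw [if_neg hC]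
  rw [if_pos hC]
  obtain ⟨x, hx⟩ := hne
  have hle : (p.1:ℕ) ≤ (p.2:ℕ) := by have := hC.2.2; rwa [Fin.le_def] at this
  have h1 : S ≠ Finset.Icc p.1 p.2 := hni _ _ hC.2.2
  have h2 : S ≠ Finset.Ico p.1 p.2 := by
    intro h
    have hx' := h ▸ hx
    rw [Finset.mem_Ico, Fin.le_def, Fin.lt_def] at hx'
    set M' : Fin n := ⟨(p.2:ℕ) - 1, by omega⟩ with hM'def
    have hM' : (M':ℕ) = (p.2:ℕ) - 1 := rfl
    refine hni p.1 M' (by rw [Fin.le_def]; omega) ?_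
    rw [h]
    ext k
    rw [Finset.mem_Ico, Finset.mem_Icc, Fin.le_def, Fin.le_def, Fin.lt_def]
    omega
  have h3 : S ≠ Finset.Ioc p.1 p.2 := by
    intro h
    have hx' := h ▸ hx
    rw [Finset.mem_Ioc, Fin.le_def, Fin.lt_def] at hx'
    set m' : Fin n := ⟨(p.1:ℕ) + 1, by omega⟩ with hm'def
    have hm' : (m':ℕ) = (p.1:ℕ) + 1 := rfl
    refine hni m' p.2 (by rw [Fin.le_def]; omega) ?_
    rw [h]
    ext k
    rw [Finset.mem_Ioc, Finset.mem_Icc, Fin.le_def, Fin.le_def, Fin.lt_def]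
    omega
  have h4 : S ≠ Finset.Ioo p.1 p.2 := by
    intro h
    have hx' := h ▸ hx
    rw [Finset.mem_Ioo, Fin.lt_def, Fin.lt_def] at hx'
    set m' : Fin n := ⟨(p.1:ℕ) + 1, by omega⟩ with hm'def
    set M' : Fin n := ⟨(p.2:ℕ) - 1, by omega⟩ with hM'def
    have hm' : (m':ℕ) = (p.1:ℕ) + 1 := rfl
    have hM' : (M':ℕ) = (p.2:ℕ) - 1 := rfl
    refine hni m' M' (by rw [Fin.le_def]; omega) ?_
    rw [h]
    ext k
    rw [Finset.mem_Ioo, Finset.mem_Icc, Fin.le_def, Fin.le_def, Fin.lt_def, Fin.lt_def]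
    omega
  rw [if_neg h1, if_neg h2, if_neg h3, if_neg h4]
  ring

lemma sep_config {m M a b : Fin n} (hmM : m ≤ M) (hab : (b:ℕ) = (a:ℕ) + 1)
    (hsep : ¬ (a ∈ Finset.Icc m M ↔ b ∈ Finset.Icc m M)) :
    ((a:ℕ) + 1 = (m:ℕ) ∧ b = m ∧ a ∉ Finset.Icc m M ∧ b ∈ Finset.Icc m M) ∨
      ((b:ℕ) = (M:ℕ) + 1 ∧ a = M ∧ a ∈ Finset.Icc m M ∧ b ∉ Finset.Icc m M) := by
  rw [Fin.le_def] at hmM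
  by_cases ha : a ∈ Finset.Icc m M
  · right
    have hb : b ∉ Finset.Icc m M := by tauto
    rw [Finset.mem_Icc, Fin.le_def, Fin.le_def] at ha hb
    have hav : (b:ℕ) = (M:ℕ) + 1 ∧ (a:ℕ) = (M:ℕ) := by omega
    refine ⟨hav.1, Fin.ext hav.2, ?_, ?_⟩ <;>
      rw [Finset.mem_Icc, Fin.le_def, Fin.le_def] <;> omega
  · left
    have hb : b ∈ Finset.Icc m M := by tauto
    rw [Finset.mem_Icc, Fin.le_def, Fin.le_def] at ha hb
    have hav : (a:ℕ) + 1 = (m:ℕ) ∧ (b:ℕ) = (m:ℕ) := by omega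
    refine ⟨hav.1, Fin.ext hav.2, ?_, ?_⟩ <;>
      rw [Finset.mem_Icc, Fin.le_def, Fin.le_def] <;> omega

lemma natCoeff_zero_of_sep {S : Finset (Fin n)} {a b : Fin n}
    (hab : (b:ℕ) = (a:ℕ) + 1) (hεab : ε a = ε b)
    (hsep : ¬ (a ∈ S ↔ b ∈ S)) : natCoeff ε c S = 0 := by
  have hne : S.Nonempty := by
    by_cases ha : a ∈ S
    · exact ⟨a, ha⟩
    · exact ⟨b, by tauto⟩
  by_cases hint : ∃ m M : Fin n, m ≤ M ∧ S = Finset.Icc m M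
  case neg =>
    exact natCoeff_not_interval hne (fun m M h hS => hint ⟨m, M, h, hS⟩)
  obtain ⟨m, M, hmM, rfl⟩ := hint
  rw [natCoeff_Icc hmM]
  rcases sep_config hmM hab hsep with ⟨h1, rfl, -, -⟩ | ⟨h1, rfl, -, -⟩
  · have hiff : (ε b = c) ↔ (∃ a' : Fin n, (a':ℕ) + 1 = (b:ℕ) ∧ ε a' = c) := by
      constructor
      · intro h; exact ⟨a, by omega, hεab.trans h⟩
      · rintro ⟨a', ha', h⟩
        have : a' = a := Fin.ext (by omega)
        rw [this] at h
        rw [← hεab, h]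
    rw [if_congr hiff rfl rfl, sub_self, zero_mul]
  · have hiff : (ε a = c) ↔ (∃ b' : Fin n, (b':ℕ) = (a:ℕ) + 1 ∧ ε b' = c) := by
      constructor
      · intro h; exact ⟨b, by omega, hεab.symm.trans h⟩
      · rintro ⟨b', hb', h⟩
        have : b' = b := Fin.ext (by omega)
        rw [this] at h
        rw [hεab, h]
    rw [if_congr hiff rfl rfl, sub_self, mul_zero]

lemma natCoeff_sep_colors {S : Finset (Fin n)} (hnz : natCoeff ε c S ≠ 0) {a b : Fin n}
    (hab : (b:ℕ) = (a:ℕ) + 1) (hsep : ¬ (a ∈ S ↔ b ∈ S)) :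
    ε a ≠ ε b ∧ (ε a = c ∨ ε b = c) := by
  have hne : S.Nonempty := by
    by_cases ha : a ∈ S
    · exact ⟨a, ha⟩
    · exact ⟨b, by tauto⟩
  refine ⟨fun h => hnz (natCoeff_zero_of_sep hab h hsep), ?_⟩
  by_contra hcol
  push_neg at hcol
  obtain ⟨hac, hbc⟩ := hcol
  by_cases hint : ∃ m M : Fin n, m ≤ M ∧ S = Finset.Icc m M
  case neg =>
    exact hnz (natCoeff_not_interval hne (fun m M h hS => hint ⟨m, M, h, hS⟩))
  obtain ⟨m, M, hmM, rfl⟩ := hint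
  rw [natCoeff_Icc hmM] at hnz
  rcases sep_config hmM hab hsep with ⟨h1, rfl, -, -⟩ | ⟨h1, rfl, -, -⟩
  · refine hnz ?_
    have e1 : (if ε b = c then (1:ℤ) else 0) = 0 := if_neg hbc
    have e2 : (if ∃ a' : Fin n, (a':ℕ) + 1 = (b:ℕ) ∧ ε a' = c then (1:ℤ) else 0) = 0 := by
      refine if_neg ?_
      rintro ⟨a', ha', h⟩
      have : a' = a := Fin.ext (by omega)
      rw [this] at h
      exact hac h
    rw [e1, e2, sub_self, zero_mul]
  · refine hnz ?_
    have e1 : (if ε a = c then (1:ℤ) else 0) = 0 := if_neg hac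
    have e2 : (if ∃ b' : Fin n, (b':ℕ) = (a:ℕ) + 1 ∧ ε b' = c then (1:ℤ) else 0) = 0 := by
      refine if_neg ?_
      rintro ⟨b', hb', h⟩
      have : b' = b := Fin.ext (by omega)
      rw [this] at h
      exact hbc h
    rw [e1, e2, sub_self, mul_zero]

end Canc


section PreTrans
variable {n : ℕ}

lemma nat_flip' (P : ℕ → Prop) : ∀ d a, ¬ (P a ↔ P (a + d)) →
    ∃ k, a ≤ k ∧ k < a + d ∧ ¬ (P k ↔ P (k + 1)) := by
  intro d
  induction d with
  | zero => intro a h; simp at h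
  | succ d ih =>
    intro a h
    by_cases h2 : P a ↔ P (a + d)
    · refine ⟨a + d, by omega, by omega, ?_⟩
      have e : a + (d + 1) = (a + d) + 1 := by omega
      rw [e] at h
      tauto
    · obtain ⟨k, h1, h2', h3⟩ := ih a h2
      exact ⟨k, h1, by omega, h3⟩

lemma fin_consec {A B : Fin n} (h1 : A < B) (h2 : ∀ y : Fin n, ¬ (A < y ∧ y < B)) :
    (B:ℕ) = (A:ℕ) + 1 := by
  rw [Fin.lt_def] at h1
  by_contra hc
  have hy : (A:ℕ) + 1 < n := by have := B.isLt; omega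
  exact h2 ⟨(A:ℕ) + 1, hy⟩ (by constructor <;> rw [Fin.lt_def] <;> simp <;> omega)

lemma mem_image_symm (e : Equiv.Perm (Fin n)) {X : Finset (Fin n)} {k : Fin n} :
    k ∈ X.image ⇑e ↔ e.symm k ∈ X := by
  constructor
  · intro h
    rw [Finset.mem_image] at h
    obtain ⟨x, hx, rfl⟩ := h
    simpa using hx
  · intro h
    rw [Finset.mem_image]
    exact ⟨e.symm k, h, by simp⟩

lemma eq_image_iff (e : Equiv.Perm (Fin n)) (S Y : Finset (Fin n)) :
    S = Y.image ⇑e ↔ S.image ⇑e.symm = Y := by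
  constructor
  · rintro rfl
    ext k
    simp [Finset.image_image]
  · rintro rfl
    ext k
    simp [Finset.image_image]

end PreTrans

section ChiTransfer
variable {n : ℕ}

lemma IccChi_eq (χ : Fin n → Bool) (a b : Fin n) :
    IccChi χ a b =
      (Finset.Icc ((sChi χ).symm a) ((sChi χ).symm b)).image ⇑(sChi χ) := by
  ext k
  rw [mem_image_symm, Finset.mem_Icc, IccChi, Finset.mem_filter]
  simp only [Finset.mem_univ, true_and, leChi, ltChi, not_lt]

lemma IcoChi_eq (χ : Fin n → Bool) (a b : Fin n) :
    IcoChi χ a b =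
      (Finset.Ico ((sChi χ).symm a) ((sChi χ).symm b)).image ⇑(sChi χ) := by
  ext k
  rw [mem_image_symm, Finset.mem_Ico, IcoChi, Finset.mem_filter]
  simp only [Finset.mem_univ, true_and, leChi, ltChi, not_lt]

lemma IocChi_eq (χ : Fin n → Bool) (a b : Fin n) :
    IocChi χ a b =
      (Finset.Ioc ((sChi χ).symm a) ((sChi χ).symm b)).image ⇑(sChi χ) := by
  ext k
  rw [mem_image_symm, Finset.mem_Ioc, IocChi, Finset.mem_filter]
  simp only [Finset.mem_univ, true_and, leChi, ltChi, not_lt]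

lemma IooChi_eq (χ : Fin n → Bool) (a b : Fin n) :
    IooChi χ a b =
      (Finset.Ioo ((sChi χ).symm a) ((sChi χ).symm b)).image ⇑(sChi χ) := by
  ext k
  rw [mem_image_symm, Finset.mem_Ioo, IooChi, Finset.mem_filter]
  simp only [Finset.mem_univ, true_and, leChi, ltChi, not_lt]

variable {ι : Type*} [DecidableEq ι]

lemma taurCoeff_eq_natCoeff (χ : Fin n → Bool) (ε : Fin n → ι) (c : ι) (S : Finset (Fin n)) :
    taurCoeff χ ε c S = natCoeff (ε ∘ ⇑(sChi χ)) c (S.image ⇑(sChi χ).symm) := by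
  rw [taurCoeff, natCoeff]
  apply Fintype.sum_equiv (Equiv.prodCongr (sChi χ).symm (sChi χ).symm)
  intro p
  simp only [Equiv.prodCongr_apply, Prod.map_fst, Prod.map_snd]
  have h1 : (ε p.1 = c ∧ ε p.2 = c ∧ leChi χ p.1 p.2) ↔
      ((ε ∘ ⇑(sChi χ)) ((sChi χ).symm p.1) = c ∧ (ε ∘ ⇑(sChi χ)) ((sChi χ).symm p.2) = c ∧
        (sChi χ).symm p.1 ≤ (sChi χ).symm p.2) := by
    simp only [Function.comp_apply, Equiv.apply_symm_apply]
    rw [leChi, ltChi, not_lt]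
  have h2 : (S = IccChi χ p.1 p.2) ↔
      (S.image ⇑(sChi χ).symm = Finset.Icc ((sChi χ).symm p.1) ((sChi χ).symm p.2)) := by
    rw [IccChi_eq, eq_image_iff]
  have h3 : (S = IcoChi χ p.1 p.2) ↔
      (S.image ⇑(sChi χ).symm = Finset.Ico ((sChi χ).symm p.1) ((sChi χ).symm p.2)) := by
    rw [IcoChi_eq, eq_image_iff]
  have h4 : (S = IocChi χ p.1 p.2) ↔
      (S.image ⇑(sChi χ).symm = Finset.Ioc ((sChi χ).symm p.1) ((sChi χ).symm p.2)) := by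
    rw [IocChi_eq, eq_image_iff]
  have h5 : (S = IooChi χ p.1 p.2) ↔
      (S.image ⇑(sChi χ).symm = Finset.Ioo ((sChi χ).symm p.1) ((sChi χ).symm p.2)) := by
    rw [IooChi_eq, eq_image_iff]
  exact if_congr h1
    (by rw [if_congr h2 rfl rfl, if_congr h3 rfl rfl, if_congr h4 rfl rfl, if_congr h5 rfl rfl])
    rfl

lemma fin_walk {S : Finset (Fin n)} (σ : Equiv.Perm (Fin n)) (p q : Fin n)
    (hpq : (p:ℕ) < (q:ℕ)) (hne : ¬ (σ p ∈ S ↔ σ q ∈ S)) :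
    ∃ k : ℕ, ∃ hk : k + 1 < n, (p:ℕ) ≤ k ∧ k + 1 ≤ (q:ℕ) ∧
      ¬ (σ ⟨k, Nat.lt_of_succ_lt hk⟩ ∈ S ↔ σ ⟨k + 1, hk⟩ ∈ S) := by
  have hq' : (p:ℕ) + ((q:ℕ) - (p:ℕ)) = (q:ℕ) := by omega
  have h0 : ¬ ((∀ h : (p:ℕ) < n, σ ⟨(p:ℕ), h⟩ ∈ S) ↔
      (∀ h : (p:ℕ) + ((q:ℕ) - (p:ℕ)) < n,
        σ ⟨(p:ℕ) + ((q:ℕ) - (p:ℕ)), h⟩ ∈ S)) := by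
    rw [hq']
    have ep : (∀ h : (p:ℕ) < n, σ ⟨(p:ℕ), h⟩ ∈ S) ↔ σ p ∈ S :=
      ⟨fun f => by have := f p.isLt; rwa [Fin.eta] at this, fun m h => by rwa [Fin.eta]⟩
    have eq' : (∀ h : (q:ℕ) < n, σ ⟨(q:ℕ), h⟩ ∈ S) ↔ σ q ∈ S :=
      ⟨fun f => by have := f q.isLt; rwa [Fin.eta] at this, fun m h => by rwa [Fin.eta]⟩
    rw [ep, eq']
    exact hne
  obtain ⟨k, hk1, hk2, hk3⟩ :=
    nat_flip' (fun t => ∀ h : t < n, σ ⟨t, h⟩ ∈ S) ((q:ℕ) - (p:ℕ)) (p:ℕ) h0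
  have hkq : k + 1 ≤ (q:ℕ) := by omega
  have hkn : k + 1 < n := by have := q.isLt; omega
  refine ⟨k, hkn, hk1, hkq, ?_⟩
  intro hiff
  apply hk3
  have e1 : (∀ h : k < n, σ ⟨k, h⟩ ∈ S) ↔ σ ⟨k, Nat.lt_of_succ_lt hkn⟩ ∈ S :=
    ⟨fun f => f _, fun m _ => m⟩
  have e2 : (∀ h : k + 1 < n, σ ⟨k + 1, h⟩ ∈ S) ↔ σ ⟨k + 1, hkn⟩ ∈ S :=
    ⟨fun f => f _, fun m _ => m⟩
  rw [e1, e2]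
  exact hiff

end ChiTransfer

/-- In the formal sum defining `⊤_ι(z₁⋯z_n)`, every term whose tensor splitting cuts
through a maximal `ε`-monochromatic `χ`-interval cancels (part a); a surviving term
puts each cut between two `≺_χ`-consecutive indices of distinct `ε`-colours, exactly
one of which is `ι`-coloured (part b); in particular no maximal `ε`-monochromatic
`χ`-interval is split across the tensor sign of a surviving term (part c). -/
theorem taur_cancellation {n : ℕ} {ι : Type*} [DecidableEq ι]
    (χ : Fin n → Bool) (ε : Fin n → ι) (c : ι) (S : Finset (Fin n)) :
    ((∃ a b : Fin n, ε a = ε b ∧ ltChi χ a b ∧ (∀ x : Fin n, ¬ (ltChi χ a x ∧ ltChi χ x b)) ∧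
        ¬ ((a ∈ S) ↔ (b ∈ S))) → taurCoeff χ ε c S = 0) ∧
    (taurCoeff χ ε c S ≠ 0 →
      (∀ a b : Fin n, ltChi χ a b → (∀ x : Fin n, ¬ (ltChi χ a x ∧ ltChi χ x b)) →
          ¬ ((a ∈ S) ↔ (b ∈ S)) → (ε a ≠ ε b ∧ (ε a = c ∨ ε b = c))) ∧
      (∀ J : Set (Fin n), IsMaxMono χ ε J → (J ⊆ ↑S ∨ ∀ x ∈ J, x ∉ S))) := by
  have htrans : taurCoeff χ ε c S = natCoeff (ε ∘ ⇑(sChi χ)) c (S.image ⇑(sChi χ).symm) :=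
    taurCoeff_eq_natCoeff χ ε c S
  have hmem : ∀ k : Fin n, (sChi χ).symm k ∈ S.image ⇑(sChi χ).symm ↔ k ∈ S := by
    intro k
    rw [mem_image_symm]
    simp
  have parta : (∃ a b : Fin n, ε a = ε b ∧ ltChi χ a b ∧
      (∀ x : Fin n, ¬ (ltChi χ a x ∧ ltChi χ x b)) ∧ ¬ ((a ∈ S) ↔ (b ∈ S))) →
      taurCoeff χ ε c S = 0 := by
    rintro ⟨a, b, hεab, hlt, hcons, hsep⟩
    rw [htrans]
    have hltAB : (sChi χ).symm a < (sChi χ).symm b := hlt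
    have hcons' : ∀ y : Fin n, ¬ ((sChi χ).symm a < y ∧ y < (sChi χ).symm b) := by
      intro y hy
      refine hcons (sChi χ y) ⟨?_, ?_⟩
      · show (sChi χ).symm a < (sChi χ).symm (sChi χ y)
        rw [Equiv.symm_apply_apply]
        exact hy.1
      · show (sChi χ).symm (sChi χ y) < (sChi χ).symm b
        rw [Equiv.symm_apply_apply]
        exact hy.2
    have hab : (((sChi χ).symm b : Fin n) : ℕ) = (((sChi χ).symm a : Fin n) : ℕ) + 1 :=
      fin_consec hltAB hcons'
    refine natCoeff_zero_of_sep hab ?_ ?_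
    · show ε (sChi χ ((sChi χ).symm a)) = ε (sChi χ ((sChi χ).symm b))
      rwa [Equiv.apply_symm_apply, Equiv.apply_symm_apply]
    · rw [hmem a, hmem b]
      exact hsep
  refine ⟨parta, fun hnz => ⟨?_, ?_⟩⟩
  · -- part (b1)
    intro a b hlt hcons hsep
    rw [htrans] at hnz
    have hltAB : (sChi χ).symm a < (sChi χ).symm b := hlt
    have hcons' : ∀ y : Fin n, ¬ ((sChi χ).symm a < y ∧ y < (sChi χ).symm b) := by
      intro y hy
      refine hcons (sChi χ y) ⟨?_, ?_⟩
      · show (sChi χ).symm a < (sChi χ).symm (sChi χ y)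
        rw [Equiv.symm_apply_apply]
        exact hy.1
      · show (sChi χ).symm (sChi χ y) < (sChi χ).symm b
        rw [Equiv.symm_apply_apply]
        exact hy.2
    have hab : (((sChi χ).symm b : Fin n) : ℕ) = (((sChi χ).symm a : Fin n) : ℕ) + 1 :=
      fin_consec hltAB hcons'
    have hres := natCoeff_sep_colors hnz hab (by rw [hmem a, hmem b]; exact hsep)
    simpa using hres
  · -- part (c)
    intro J hJ
    by_contra hcon
    push_neg at hcon
    obtain ⟨hns, x, hxJ, hxS⟩ := hcon
    rw [Set.not_subset] at hns
    obtain ⟨y, hyJ, hyS⟩ := hns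
    have hyS' : y ∉ S := fun h => hyS (Finset.mem_coe.mpr h)
    obtain ⟨hJne, hJint, hJmono, -⟩ := hJ
    have main : ∀ p q : Fin n, (p:ℕ) < (q:ℕ) → sChi χ p ∈ J → sChi χ q ∈ J →
        ¬ (sChi χ p ∈ S ↔ sChi χ q ∈ S) → False := by
      intro p q hpq hpJ hqJ hmemne
      obtain ⟨k, hkn, hk1, hk2, hk3⟩ := fin_walk (sChi χ) p q hpq hmemne
      have hk' : k < n := Nat.lt_of_succ_lt hkn
      have hsymu : (sChi χ).symm (sChi χ ⟨k, hk'⟩) = ⟨k, hk'⟩ := Equiv.symm_apply_apply _ _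
      have hsymv : (sChi χ).symm (sChi χ ⟨k + 1, hkn⟩) = ⟨k + 1, hkn⟩ :=
        Equiv.symm_apply_apply _ _
      have huJ : sChi χ ⟨k, hk'⟩ ∈ J := by
        rcases eq_or_lt_of_le hk1 with h | h
        · rw [show (⟨k, hk'⟩ : Fin n) = p from Fin.ext h.symm]
          exact hpJ
        · refine hJint (sChi χ p) _ (sChi χ q) hpJ hqJ ?_ ?_
          · show (sChi χ).symm (sChi χ p) < (sChi χ).symm (sChi χ ⟨k, hk'⟩)
            rw [Equiv.symm_apply_apply, Equiv.symm_apply_apply]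
            exact Fin.lt_def.mpr h
          · show (sChi χ).symm (sChi χ ⟨k, hk'⟩) < (sChi χ).symm (sChi χ q)
            rw [Equiv.symm_apply_apply, Equiv.symm_apply_apply]
            exact Fin.lt_def.mpr (show k < (q:ℕ) by omega)
      have hvJ : sChi χ ⟨k + 1, hkn⟩ ∈ J := by
        rcases eq_or_lt_of_le hk2 with h | h
        · rw [show (⟨k + 1, hkn⟩ : Fin n) = q from Fin.ext h]
          exact hqJ
        · refine hJint (sChi χ p) _ (sChi χ q) hpJ hqJ ?_ ?_
          · show (sChi χ).symm (sChi χ p) < (sChi χ).symm (sChi χ ⟨k + 1, hkn⟩)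
            rw [Equiv.symm_apply_apply, Equiv.symm_apply_apply]
            exact Fin.lt_def.mpr (show (p:ℕ) < k + 1 by omega)
          · show (sChi χ).symm (sChi χ ⟨k + 1, hkn⟩) < (sChi χ).symm (sChi χ q)
            rw [Equiv.symm_apply_apply, Equiv.symm_apply_apply]
            exact Fin.lt_def.mpr h
      have hεuv : ε (sChi χ ⟨k, hk'⟩) = ε (sChi χ ⟨k + 1, hkn⟩) := hJmono _ huJ _ hvJ
      have hltuv : ltChi χ (sChi χ ⟨k, hk'⟩) (sChi χ ⟨k + 1, hkn⟩) := by
        show (sChi χ).symm (sChi χ ⟨k, hk'⟩) < (sChi χ).symm (sChi χ ⟨k + 1, hkn⟩)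
        rw [hsymu, hsymv]
        exact Fin.lt_def.mpr (show k < k + 1 by omega)
      have hconsuv : ∀ t : Fin n,
          ¬ (ltChi χ (sChi χ ⟨k, hk'⟩) t ∧ ltChi χ t (sChi χ ⟨k + 1, hkn⟩)) := by
        intro t ht
        have h1 : (sChi χ).symm (sChi χ ⟨k, hk'⟩) < (sChi χ).symm t := ht.1
        have h2 : (sChi χ).symm t < (sChi χ).symm (sChi χ ⟨k + 1, hkn⟩) := ht.2
        rw [hsymu, Fin.lt_def] at h1
        rw [hsymv, Fin.lt_def] at h2
        simp only [Fin.val_mk] at h1 h2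
        omega
      exact hnz (parta ⟨_, _, hεuv, hltuv, hconsuv, hk3⟩)
    have hx' : sChi χ ((sChi χ).symm x) = x := Equiv.apply_symm_apply _ _
    have hy' : sChi χ ((sChi χ).symm y) = y := Equiv.apply_symm_apply _ _
    rcases lt_trichotomy (((sChi χ).symm x : Fin n) : ℕ) (((sChi χ).symm y : Fin n) : ℕ)
      with h | h | h
    · exact main ((sChi χ).symm x) ((sChi χ).symm y) h (by rwa [hx']) (by rwa [hy'])
        (by rw [hx', hy']; intro hiff; exact hyS' (hiff.mp hxS))
    · have hxy : x = y := by
        have := Fin.ext h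
        have h2 := congrArg (sChi χ) this
        rwa [hx', hy'] at h2
      exact hyS' (hxy ▸ hxS)
    · exact main ((sChi χ).symm y) ((sChi χ).symm x) h (by rwa [hy']) (by rwa [hx'])
        (by rw [hx', hy']; intro hiff; exact hyS' (hiff.mpr hxS))
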